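/- For all pairs of policies π and π' of the MDP, 1ᵀ(v_{π'} − v_π) = x_{π'}ᵀ (T_{π'} v_π − v_π), where x_{π'} = (I − γ P_{π'}ᵀ)⁻¹ 1. -/
import Mathlib


open Matrix BigOperators

/-- A finite discounted MDP with `n ≥ 1` states and `m ≥ 2` actions:
transition probabilities `p i a j`, rewards `r i a j`, discount factor `γ ∈ (0,1)`. -/
structure MDP (n m : ℕ) : Type where
  n_pos : 1 ≤ n
  m_ge_two : 2 ≤ m
  p : Fin n → Fin m → Fin n → ℝ
  r : Fin n → Fin m → Fin n → ℝ
  γ : ℝ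
  p_nonneg : ∀ i a j, 0 ≤ p i a j
  p_sum : ∀ i a, ∑ j, p i a j = 1
  γ_pos : 0 < γ
  γ_lt_one : γ < 1

/-- A (stationary deterministic) policy. -/
abbrev MDP.Policy (n m : ℕ) : Type := Fin n → Fin m

namespace MDP

variable {n m : ℕ}

/-- The row-stochastic transition matrix `P_π` of a policy. -/
def P (M : MDP n m) (π : Policy n m) : Matrix (Fin n) (Fin n) ℝ :=
  Matrix.of fun i j => M.p i (π i) j

/-- The expected reward vector `r_π` of a policy. -/
def rPol (M : MDP n m) (π : Policy n m) : Fin n → ℝ :=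
  fun i => ∑ j, M.p i (π i) j * M.r i (π i) j

/-- The Bellman operator `T_π v = r_π + γ P_π v` of a policy. -/
def Tpol (M : MDP n m) (π : Policy n m) (v : Fin n → ℝ) : Fin n → ℝ :=
  fun i => M.rPol π i + M.γ * (M.P π *ᵥ v) i

/-- `IsValue M V` asserts that, for every policy `π`, `V π` is the value function `v_π`,
i.e. the (unique) solution of the Bellman equation `v_π = T_π v_π`. -/
def IsValue (M : MDP n m) (V : Policy n m → Fin n → ℝ) : Prop :=
  ∀ π, V π = M.Tpol π (V π)

/-- The optimal Bellman operator `T v = max_π T_π v` (componentwise maximum). -/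
noncomputable def T (M : MDP n m) (v : Fin n → ℝ) : Fin n → ℝ :=
  fun i => ⨆ π : Policy n m, M.Tpol π v i

/-- The optimal value function `v_*`, the componentwise maximum of `v_π` over policies. -/
noncomputable def vStar (M : MDP n m) (V : Policy n m → Fin n → ℝ) : Fin n → ℝ :=
  fun i => ⨆ π : Policy n m, V π i

/-- A policy is optimal when its value equals `v_*`. -/
def IsOptimal (M : MDP n m) (V : Policy n m → Fin n → ℝ) (π : Policy n m) : Prop :=
  V π = M.vStar V

/-- `π'` is greedy with respect to `v_π`: `T_{π'} v_π = T v_π`.  One step of Howard's PI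
from a non-optimal `π` moves to such a `π'`. -/
def Greedy (M : MDP n m) (V : Policy n m → Fin n → ℝ) (π π' : Policy n m) : Prop :=
  M.Tpol π' (V π) = M.T (V π)

/-- One step of Simplex-PI: `π'` agrees with `π` except at a single state `s` maximizing
the advantage `a_π(i) = (T v_π - v_π)(i)`, where `π'(s)` achieves `T v_π(s)`. -/
def SimplexStep (M : MDP n m) (V : Policy n m → Fin n → ℝ) (π π' : Policy n m) : Prop :=
  ∃ s : Fin n, (∀ i, i ≠ s → π' i = π i) ∧
    (∀ i, M.T (V π) i - V π i ≤ M.T (V π) s - V π s) ∧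
    M.Tpol π' (V π) s = M.T (V π) s

/-- The vector `x_π = (I - γ P_πᵀ)⁻¹ 1`. -/
noncomputable def xPol (M : MDP n m) (π : Policy n m) : Fin n → ℝ :=
  ((1 : Matrix (Fin n) (Fin n) ℝ) - M.γ • (M.P π)ᵀ)⁻¹ *ᵥ (fun _ => (1 : ℝ))

/-- `R` is a recurrent class of `π`: nonempty, closed under positive-probability
transitions of `P_π`, and every state of `R` is reachable from every other state of `R`
along positive-probability transitions.  (For a deterministic MDP this is the notion of
a cycle of `π`.) -/
def IsRecClass (M : MDP n m) (π : Policy n m) (R : Set (Fin n)) : Prop :=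
  R.Nonempty ∧ (∀ i ∈ R, ∀ j, 0 < M.P π i j → j ∈ R) ∧
    ∀ i ∈ R, ∀ j ∈ R, Relation.ReflTransGen (fun a b => 0 < M.P π a b) i j

/-- A state is recurrent for `π` if it belongs to some recurrent class of `π`. -/
def Recurrent (M : MDP n m) (π : Policy n m) (i : Fin n) : Prop :=
  ∃ R : Set (Fin n), M.IsRecClass π R ∧ i ∈ R

/-- A state is transient for `π` if it is not recurrent for `π`. -/
def Transient (M : MDP n m) (π : Policy n m) (i : Fin n) : Prop :=
  ¬ M.Recurrent π i

/-- Assumption 1: `τ_t, τ_r ≥ 1` with `x_π(i) ≤ τ_t` for transient states and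
`x_π(i) ≥ n / ((1-γ) τ_r)` for recurrent states, for every policy `π`. -/
def Ass1 (M : MDP n m) (τt τr : ℝ) : Prop :=
  1 ≤ τt ∧ 1 ≤ τr ∧
    (∀ π i, M.Transient π i → M.xPol π i ≤ τt) ∧
    (∀ π i, M.Recurrent π i → (n : ℝ) / ((1 - M.γ) * τr) ≤ M.xPol π i)

/-- Assumption 2: the state space is partitioned into a set of states transient for every
policy and a set of states recurrent for every policy. -/
def Ass2 (M : MDP n m) : Prop :=
  ∃ 𝒯 ℛ : Set (Fin n), 𝒯 ∪ ℛ = Set.univ ∧ 𝒯 ∩ ℛ = ∅ ∧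
    ∀ π : Policy n m, (∀ i ∈ 𝒯, M.Transient π i) ∧ (∀ i ∈ ℛ, M.Recurrent π i)

/-- The MDP is deterministic when every transition probability is 0 or 1. -/
def Deterministic (M : MDP n m) : Prop :=
  ∀ i a j, M.p i a j = 0 ∨ M.p i a j = 1

/-- `V_max = (max_π ‖r_π‖_∞) / (1 - γ)`. -/
noncomputable def Vmax (M : MDP n m) : ℝ :=
  (⨆ π : Policy n m, ‖M.rPol π‖) / (1 - M.γ)

end MDP

section Aux

open Matrix

/-- `I - γ P` is invertible (as a unit of the matrix ring) when `P` is row-stochastic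
with nonnegative entries and `0 < γ < 1`. -/
lemma sub_smul_stochastic_det_isUnit {n : ℕ} (P : Matrix (Fin n) (Fin n) ℝ) (γ : ℝ)
    (hP0 : ∀ i j, 0 ≤ P i j) (hP1 : ∀ i, ∑ j, P i j = 1)
    (hγ0 : 0 ≤ γ) (hγ1 : γ < 1) :
    IsUnit ((1 - γ • P) : Matrix (Fin n) (Fin n) ℝ).det := by
  rw [isUnit_iff_ne_zero]
  intro hdet
  obtain ⟨v, hv, hAv⟩ := (Matrix.exists_mulVec_eq_zero_iff).2 hdet
  -- v = γ P v
  have hvm : ∀ i, v i = γ * (P *ᵥ v) i := by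
    intro i
    have := congrFun hAv i
    simp [Matrix.sub_mulVec, Matrix.smul_mulVec, sub_eq_zero] at this
    simpa using this
  -- take maximizer of |v|
  have hne : (Finset.univ : Finset (Fin n)).Nonempty := by
    rcases (Finset.univ : Finset (Fin n)).eq_empty_or_nonempty with h | h
    · exfalso; apply hv
      haveI : IsEmpty (Fin n) := Finset.univ_eq_empty_iff.mp h
      exact funext fun i => isEmptyElim i
    · exact h
  obtain ⟨i, -, hi⟩ := Finset.exists_max_image Finset.univ (fun j => |v j|) hne
  have hbound : |v i| ≤ γ * |v i| := by
    calc |v i| = γ * |(P *ᵥ v) i| := by rw [hvm i, abs_mul, abs_of_nonneg hγ0]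
    _ ≤ γ * ∑ j, P i j * |v j| := by
        apply mul_le_mul_of_nonneg_left _ hγ0
        calc |(P *ᵥ v) i| = |∑ j, P i j * v j| := by simp [Matrix.mulVec, dotProduct]
        _ ≤ ∑ j, |P i j * v j| := Finset.abs_sum_le_sum_abs _ _
        _ = ∑ j, P i j * |v j| := by
            apply Finset.sum_congr rfl; intro j _
            rw [abs_mul, abs_of_nonneg (hP0 i j)]
    _ ≤ γ * ∑ j, P i j * |v i| := by
        apply mul_le_mul_of_nonneg_left _ hγ0
        apply Finset.sum_le_sum; intro j _
        exact mul_le_mul_of_nonneg_left (hi j (Finset.mem_univ j)) (hP0 i j)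
    _ = γ * |v i| := by rw [← Finset.sum_mul, hP1 i, one_mul]
  have hvi : |v i| = 0 := by
    nlinarith [abs_nonneg (v i)]
  apply hv
  funext j
  have := hi j (Finset.mem_univ j)
  rw [hvi] at this
  exact abs_nonpos_iff.1 this

end Aux

/-- for all policies `π, π'`,
`1ᵀ(v_{π'} - v_π) = x_{π'}ᵀ (T_{π'} v_π - v_π)` where `x_{π'} = (I - γ P_{π'}ᵀ)⁻¹ 1`. -/
theorem value_difference_identity' {n m : ℕ} (M : MDP n m)
    (V : MDP.Policy n m → Fin n → ℝ) (hV : M.IsValue V)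
    (π π' : MDP.Policy n m) :
    ∑ i, (V π' i - V π i) = ∑ i, M.xPol π' i * (M.Tpol π' (V π) i - V π i) := by
  classical
  set A : Matrix (Fin n) (Fin n) ℝ := 1 - M.γ • M.P π' with hAdef
  have hdet : IsUnit A.det :=
    sub_smul_stochastic_det_isUnit (M.P π') M.γ (fun i j => M.p_nonneg i (π' i ) j)
      (fun i => M.p_sum i (π' i)) M.γ_pos.le M.γ_lt_one
  set w : Fin n → ℝ := fun i => V π' i - V π i with hw
  set d : Fin n → ℝ := fun i => M.Tpol π' (V π) i - V π i with hd
  have hAw : A *ᵥ w = d := by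
    funext i
    have h1 := congrFun (hV π') i
    have h2 := congrFun (hV π) i
    simp only [MDP.Tpol] at h1 h2 ⊢
    simp only [hAdef, hw, hd, Matrix.sub_mulVec, Matrix.smul_mulVec,
      Matrix.one_mulVec, Pi.sub_apply, Pi.smul_apply, smul_eq_mul, MDP.Tpol]
    have hlin : (M.P π' *ᵥ fun i => V π' i - V π i) i
        = (M.P π' *ᵥ V π') i - (M.P π' *ᵥ V π) i := by
      simp [Matrix.mulVec, dotProduct, mul_sub, Finset.sum_sub_distrib]
    rw [hlin]
    ring_nf
    linarith [h1]
  have hwinv : w = A⁻¹ *ᵥ d := by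
    rw [← hAw, Matrix.mulVec_mulVec, Matrix.nonsing_inv_mul A hdet, Matrix.one_mulVec]
  have hx : M.xPol π' = (A⁻¹)ᵀ *ᵥ (fun _ => (1 : ℝ)) := by
    have : ((1 : Matrix (Fin n) (Fin n) ℝ) - M.γ • (M.P π')ᵀ) = Aᵀ := by
      simp [hAdef, Matrix.transpose_sub, Matrix.transpose_smul]
    rw [MDP.xPol, this, ← Matrix.transpose_nonsing_inv]
  calc ∑ i, (V π' i - V π i) = (fun _ => (1:ℝ)) ⬝ᵥ w := by simp [dotProduct, hw]
    _ = (fun _ => (1:ℝ)) ⬝ᵥ (A⁻¹ *ᵥ d) := by rw [hwinv]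
    _ = ((A⁻¹)ᵀ *ᵥ (fun _ => (1:ℝ))) ⬝ᵥ d := by
        rw [Matrix.dotProduct_mulVec, Matrix.mulVec_transpose]
    _ = ∑ i, M.xPol π' i * d i := by rw [hx]; simp [dotProduct]
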